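/- Let Γ be a finite group acting on a Lie algebra K by automorphisms. Let K^Γ denote the Lie subalgebra of fixed points, and let K/Γ denote the quotient of K by the subspace spanned by g·u − u (g ∈ Γ, u ∈ K), equipped with the bracket induced by [u,v]_Γ = Σ_{g∈Γ}[g·u,v]. Then the map ψ: K → K^Γ defined by ψ(u) = Σ_{g∈Γ} g·u induces a Lie algebra isomorphism from K/Γ onto K^Γ. -/

import Mathlib

open scoped BigOperators

private lemma aux_sum_lie {K : Type*} [LieRing K] {ι : Type*} (s : Finset ι)
    (f : ι → K) (v : K) : ⁅∑ i ∈ s, f i, v⁆ = ∑ i ∈ s, ⁅f i, v⁆ := by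
  induction s using Finset.cons_induction with
  | empty => simp
  | cons a s h ih => simp [Finset.sum_cons, add_lie, ih]

private lemma aux_lie_sum {K : Type*} [LieRing K] {ι : Type*} (s : Finset ι)
    (f : ι → K) (v : K) : ⁅v, ∑ i ∈ s, f i⁆ = ∑ i ∈ s, ⁅v, f i⁆ := by
  induction s using Finset.cons_induction with
  | empty => simp
  | cons a s h ih => simp [Finset.sum_cons, lie_add, ih]

/-- For a finite group `Γ` acting on a Lie algebra `K` by automorphisms,
the averaging map `ψ(u) = ∑_{g∈Γ} g·u` induces a Lie algebra isomorphism from the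
coinvariants `K/Γ` (quotient of `K` by `span{g·u − u}` with the bracket induced by
`[u,v]_Γ = ∑_{g∈Γ}[g·u,v]`) onto the fixed-point subalgebra `K^Γ`: it lands in the
fixed points, is onto the fixed points, its kernel is exactly `span{g·u − u}`, and
it intertwines the averaged bracket with the Lie bracket. -/
theorem averaging_map_induces_iso_coinvariants_to_invariants
    {K : Type*} [LieRing K] [LieAlgebra ℂ K]
    {Γ : Type*} [Group Γ] [Fintype Γ] (σ : Γ → K →ₗ[ℂ] K)
    (hone : σ 1 = LinearMap.id)
    (hmul : ∀ g h : Γ, σ (g * h) = (σ g).comp (σ h))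
    (hbr : ∀ (g : Γ) (u v : K), σ g ⁅u, v⁆ = ⁅σ g u, σ g v⁆) :
    (∀ (u : K) (g : Γ), σ g (∑ g' : Γ, σ g' u) = ∑ g' : Γ, σ g' u) ∧
    (∀ y : K, (∀ g : Γ, σ g y = y) → ∃ u : K, (∑ g : Γ, σ g u) = y) ∧
    (∀ u : K, (∑ g : Γ, σ g u) = 0 ↔
      u ∈ Submodule.span ℂ {x : K | ∃ (h : Γ) (w : K), x = σ h w - w}) ∧
    (∀ u v : K, (∑ g : Γ, σ g (∑ h : Γ, ⁅σ h u, v⁆))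
      = ⁅∑ g : Γ, σ g u, ∑ g : Γ, σ g v⁆) := by
  have hcard : (Fintype.card Γ : ℂ) ≠ 0 := by
    exact_mod_cast Nat.cast_ne_zero.mpr Fintype.card_ne_zero
  have key : ∀ (u : K) (g : Γ), σ g (∑ g' : Γ, σ g' u) = ∑ g' : Γ, σ g' u := by
    intro u g
    rw [map_sum]
    have : ∀ g' : Γ, σ g (σ g' u) = σ (g * g') u := by
      intro g'; rw [hmul]; rfl
    simp_rw [this]
    exact Fintype.sum_equiv (Equiv.mulLeft g) _ (fun g' => σ g' u) (fun x => rfl)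
  refine ⟨key, ?_, ?_, ?_⟩
  · intro y hy
    refine ⟨((Fintype.card Γ : ℂ))⁻¹ • y, ?_⟩
    simp_rw [map_smul, hy, Finset.sum_const, Finset.card_univ, ← Nat.cast_smul_eq_nsmul ℂ,
      smul_smul]
    rw [mul_inv_cancel₀ hcard, one_smul]
  · intro u
    constructor
    · intro h0
      have : u = ((Fintype.card Γ : ℂ))⁻¹ • ∑ g : Γ, (u - σ g u) := by
        rw [Finset.sum_sub_distrib, h0, sub_zero, Finset.sum_const, Finset.card_univ,
          ← Nat.cast_smul_eq_nsmul ℂ, smul_smul, inv_mul_cancel₀ hcard, one_smul]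
      rw [this]
      refine Submodule.smul_mem _ _ (Submodule.sum_mem _ fun g _ => ?_)
      rw [show u - σ g u = -(σ g u - u) by rw [neg_sub]]
      exact Submodule.neg_mem _ (Submodule.subset_span ⟨g, u, rfl⟩)
    · intro hu
      induction hu using Submodule.span_induction with
      | mem x hx =>
        obtain ⟨h, w, rfl⟩ := hx
        simp_rw [map_sub]
        have h1 : ∑ g : Γ, σ g (σ h w) = ∑ g : Γ, σ g w := by
          have : ∀ g : Γ, σ g (σ h w) = σ (g * h) w := fun g => by rw [hmul]; rfl
          simp_rw [this]
          exact Fintype.sum_equiv (Equiv.mulRight h) _ (fun g => σ g w) (fun x => rfl)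
        rw [Finset.sum_sub_distrib, h1, sub_self]
      | zero => simp
      | add x y _ _ hx hy => simp_rw [map_add, Finset.sum_add_distrib, hx, hy, add_zero]
      | smul c x _ hx => simp_rw [map_smul, ← Finset.smul_sum, hx, smul_zero]
  · intro u v
    have step : ∀ g : Γ, σ g (∑ h : Γ, ⁅σ h u, v⁆) = ⁅∑ h : Γ, σ h u, σ g v⁆ := by
      intro g
      rw [map_sum]
      have : ∀ h : Γ, σ g ⁅σ h u, v⁆ = ⁅σ (g * h) u, σ g v⁆ := by
        intro h; rw [hbr, hmul]; rfl
      simp_rw [this]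
      rw [aux_sum_lie]
      exact Fintype.sum_equiv (Equiv.mulLeft g) _ (fun h => ⁅σ h u, σ g v⁆) (fun x => rfl)
    simp_rw [step, ← aux_lie_sum]
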